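/- Let n ≥ 3 and k ≥ 2, and let Pⁿₖ denote the Legendre polynomial of dimension n and degree k, normalized so that Pⁿₖ(1) = 1. Then (n-1)/((k-1)(k+n-1)) · A₁Pⁿₖ equals the convex combination -(k/(2k+n-2))·Pⁿ⁺²ₖ₋₂ - ((k+n-2)/(2k+n-2))·Pⁿ⁺²ₖ, where A₁ψ(t) = ψ(t) - tψ'(t). -/

import Mathlib

open Polynomial

lemma coeff_rec (α μ : ℝ) (f : Polynomial ℝ)
    (hf : (1 - X ^ 2) * derivative (derivative f) - C α * (X * derivative f) + C μ * f = 0) :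
    ∀ i : ℕ, ((i : ℝ) + 1) * ((i : ℝ) + 2) * f.coeff (i + 2) =
      ((i : ℝ) * ((i : ℝ) - 1) + α * (i : ℝ) - μ) * f.coeff i := by
  have key : ∀ i : ℕ, ((1 - X ^ 2) * derivative (derivative f)
      - C α * (X * derivative f) + C μ * f).coeff i = 0 := by
    intro i; rw [hf, coeff_zero]
  intro i
  match i with
  | 0 =>
    have h := key 0
    simp [coeff_derivative, sub_mul, one_mul, coeff_X_pow_mul', coeff_X_mul] at h
    push_cast
    linear_combination h
  | 1 =>
    have h := key 1
    simp [coeff_derivative, sub_mul, one_mul, coeff_X_pow_mul', coeff_X_mul] at h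
    push_cast
    linear_combination h
  | (i + 2) =>
    have h := key (i + 2)
    simp [coeff_derivative, sub_mul, one_mul, coeff_X_pow_mul', coeff_X_mul] at h
    push_cast
    linear_combination h

lemma factor_ne {m j c : ℕ} (hm : 3 ≤ m) (hcj : c ≠ j) :
    (c : ℝ) * ((c : ℝ) - 1) + ((m : ℝ) - 1) * (c : ℝ) - (j : ℝ) * ((j : ℝ) + (m : ℝ) - 2) ≠ 0 := by
  intro h
  have h2 : ((c : ℝ) - (j : ℝ)) * ((c : ℝ) + (j : ℝ) + (m : ℝ) - 2) = 0 := by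
    linear_combination h
  rcases mul_eq_zero.1 h2 with h3 | h3
  · exact hcj (by exact_mod_cast sub_eq_zero.mp h3)
  · have hm' : (3 : ℝ) ≤ (m : ℝ) := by exact_mod_cast hm
    have hc : (0 : ℝ) ≤ (c : ℝ) := Nat.cast_nonneg c
    have hj : (0 : ℝ) ≤ (j : ℝ) := Nat.cast_nonneg j
    linarith

lemma chain_step (α μ : ℝ) (f : Polynomial ℝ)
    (R : ∀ i : ℕ, ((i : ℝ) + 1) * ((i : ℝ) + 2) * f.coeff (i + 2) =
      ((i : ℝ) * ((i : ℝ) - 1) + α * (i : ℝ) - μ) * f.coeff i)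
    (i : ℕ) (h0 : f.coeff i = 0) : f.coeff (i + 2) = 0 := by
  have h := R i
  rw [h0, mul_zero] at h
  have hi : ((i : ℝ) + 1) * ((i : ℝ) + 2) ≠ 0 := by positivity
  exact (mul_eq_zero.1 h).resolve_left hi

lemma wrong_parity (m j : ℕ) (hm : 3 ≤ m) (f : Polynomial ℝ)
    (R : ∀ i : ℕ, ((i : ℝ) + 1) * ((i : ℝ) + 2) * f.coeff (i + 2) =
      ((i : ℝ) * ((i : ℝ) - 1) + ((m : ℝ) - 1) * (i : ℝ)
        - (j : ℝ) * ((j : ℝ) + (m : ℝ) - 2)) * f.coeff i)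
    (i : ℕ) (hpar : i % 2 ≠ j % 2) : f.coeff i = 0 := by
  by_contra h0
  have key : ∀ t : ℕ, f.coeff (i + 2 * t) ≠ 0 := by
    intro t
    induction t with
    | zero => simpa using h0
    | succ t ih =>
      have hR := R (i + 2 * t)
      have hne : i + 2 * t ≠ j := by omega
      have hfac := factor_ne (c := i + 2 * t) (j := j) hm hne
      intro hz
      rw [show i + 2 * (t + 1) = (i + 2 * t) + 2 by ring] at hz
      rw [hz, mul_zero] at hR
      exact ih (by
        rcases mul_eq_zero.1 hR.symm with h | h
        · exact absurd h hfac
        · exact h)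
  have := key (f.natDegree + 1)
  exact this (coeff_eq_zero_of_natDegree_lt (by omega))

lemma legendre_unique (m j : ℕ) (hm : 3 ≤ m) (α μ : ℝ)
    (hα : α = (m : ℝ) - 1) (hμ : μ = (j : ℝ) * ((j : ℝ) + (m : ℝ) - 2))
    (f g : Polynomial ℝ)
    (hf : (1 - X ^ 2) * derivative (derivative f) - C α * (X * derivative f) + C μ * f = 0)
    (hg : (1 - X ^ 2) * derivative (derivative g) - C α * (X * derivative g) + C μ * g = 0)
    (hg1 : g.eval 1 = 1) :
    f = C (f.eval 1) * g := by
  subst hα hμ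
  have Rf := coeff_rec _ _ f hf
  have Rg := coeff_rec _ _ g hg
  set s := j % 2 with hs
  -- g.coeff s ≠ 0
  have hgs : g.coeff s ≠ 0 := by
    intro h0
    have hzero : ∀ t : ℕ, g.coeff (s + 2 * t) = 0 := by
      intro t
      induction t with
      | zero => simpa using h0
      | succ t ih =>
        rw [show s + 2 * (t + 1) = (s + 2 * t) + 2 by ring]
        exact chain_step _ _ g Rg _ ih
    have hg0 : g = 0 := by
      ext i
      rcases eq_or_ne (i % 2) (j % 2) with hp | hp
      · have : i = s + 2 * ((i - s) / 2) := by omega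
        rw [this, coeff_zero]
        exact hzero _
      · rw [coeff_zero]
        exact wrong_parity m j hm g Rg i hp
    rw [hg0] at hg1
    simp at hg1
  set r := f.coeff s / g.coeff s with hr
  have hchain : ∀ t : ℕ, f.coeff (s + 2 * t) = r * g.coeff (s + 2 * t) := by
    intro t
    induction t with
    | zero =>
      simpa using (div_mul_cancel₀ (f.coeff s) hgs).symm
    | succ t ih =>
      have hRf := Rf (s + 2 * t)
      have hRg := Rg (s + 2 * t)
      rw [show s + 2 * (t + 1) = (s + 2 * t) + 2 by ring]
      have hi : (((s + 2 * t : ℕ) : ℝ) + 1) * (((s + 2 * t : ℕ) : ℝ) + 2) ≠ 0 := by positivity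
      apply mul_left_cancel₀ hi
      rw [hRf, ih]
      linear_combination -r * hRg
  have hmain : f = C r * g := by
    ext i
    rcases eq_or_ne (i % 2) (j % 2) with hp | hp
    · have hi : i = s + 2 * ((i - s) / 2) := by omega
      rw [hi, coeff_C_mul]
      exact hchain _
    · rw [coeff_C_mul, wrong_parity m j hm f Rf i hp, wrong_parity m j hm g Rg i hp, mul_zero]
  have hev : f.eval 1 = r := by
    rw [hmain]; simp [hg1]
  rw [← hev] at hmain
  exact hmain

lemma ode_poly (m j : ℕ) (q : Polynomial ℝ)
    (h : ∀ t : ℝ, (1 - t ^ 2) * iteratedDeriv 2 (fun s => eval s q) t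
      - ((m : ℝ) - 1) * t * deriv (fun s => eval s q) t
      + (j : ℝ) * ((j : ℝ) + (m : ℝ) - 2) * eval t q = 0) :
    (1 - X ^ 2) * derivative (derivative q) - C ((m : ℝ) - 1) * (X * derivative q)
      + C ((j : ℝ) * ((j : ℝ) + (m : ℝ) - 2)) * q = 0 := by
  apply Polynomial.funext
  intro t
  have hd1 : deriv (fun s : ℝ => eval s q) = fun s => eval s (derivative q) :=
    funext fun x => Polynomial.deriv q
  have h2 : iteratedDeriv 2 (fun s : ℝ => eval s q)
      = fun s => eval s (derivative (derivative q)) := by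
    rw [show (2 : ℕ) = 1 + 1 from rfl, iteratedDeriv_succ, iteratedDeriv_one, hd1]
    exact funext fun x => Polynomial.deriv (derivative q)
  have ht := h t
  rw [h2, hd1] at ht
  simp only [eval_add, eval_sub, eval_mul, eval_C, eval_X, eval_pow, eval_one, eval_zero]
  linear_combination ht

/-- `p` is the Legendre polynomial of dimension `n` and degree `k`: it is a polynomial
function, normalized by `p 1 = 1`, satisfying the Legendre ODE
`(1-t²)y'' - (n-1)t·y' + k(k+n-2)y = 0`. -/
def IsLegendre (n k : ℕ) (p : ℝ → ℝ) : Prop :=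
  (∃ q : Polynomial ℝ, ∀ t, p t = q.eval t) ∧ p 1 = 1 ∧
    ∀ t : ℝ, (1 - t ^ 2) * iteratedDeriv 2 p t - ((n : ℝ) - 1) * t * deriv p t +
      (k : ℝ) * ((k : ℝ) + (n : ℝ) - 2) * p t = 0

/-- For `n ≥ 3`, `k ≥ 2`, with `P = Pⁿₖ`, `Q = Pⁿ⁺²ₖ₋₂`, `R = Pⁿ⁺²ₖ`:
`(n-1)/((k-1)(k+n-1)) · A₁Pⁿₖ = -(k/(2k+n-2))·Pⁿ⁺²ₖ₋₂ - ((k+n-2)/(2k+n-2))·Pⁿ⁺²ₖ`,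
where `A₁ψ(t) = ψ(t) - tψ'(t)`. -/
theorem legendre_A1_identity (n k : ℕ) (hn : 3 ≤ n) (hk : 2 ≤ k)
    (P Q R : ℝ → ℝ) (hP : IsLegendre n k P) (hQ : IsLegendre (n + 2) (k - 2) Q)
    (hR : IsLegendre (n + 2) k R) :
    ∀ t : ℝ,
      (((n : ℝ) - 1) / (((k : ℝ) - 1) * ((k : ℝ) + (n : ℝ) - 1))) * (P t - t * deriv P t) =
        -((k : ℝ) / (2 * (k : ℝ) + (n : ℝ) - 2)) * Q t -
          (((k : ℝ) + (n : ℝ) - 2) / (2 * (k : ℝ) + (n : ℝ) - 2)) * R t := by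
  obtain ⟨⟨q, hq⟩, hP1, hPode⟩ := hP
  obtain ⟨⟨qQ, hqQf⟩, hQ1, hQode⟩ := hQ
  obtain ⟨⟨qR, hqRf⟩, hR1, hRode⟩ := hR
  have hPf : P = fun t => eval t q := funext hq
  have hQf : Q = fun t => eval t qQ := funext hqQf
  have hRf : R = fun t => eval t qR := funext hqRf
  subst hPf hQf hRf
  have hq1 : eval 1 q = 1 := hP1
  have hqQ1 : eval 1 qQ = 1 := hQ1
  have hqR1 : eval 1 qR = 1 := hR1
  have Eq0 : (1 - X ^ 2) * derivative (derivative q)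
      - C ((n : ℝ) - 1) * (X * derivative q)
      + C ((k : ℝ) * ((k : ℝ) + (n : ℝ) - 2)) * q = 0 := ode_poly n k q hPode
  have EqQ := ode_poly (n + 2) (k - 2) qQ hQode
  have EqR := ode_poly (n + 2) k qR hRode
  have ecast1 : ((n + 2 : ℕ) : ℝ) - 1 = (n : ℝ) + 1 := by push_cast; ring
  have ecast2 : ((k - 2 : ℕ) : ℝ) * (((k - 2 : ℕ) : ℝ) + ((n + 2 : ℕ) : ℝ) - 2)
      = ((k : ℝ) - 2) * ((k : ℝ) + (n : ℝ) - 2) := by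
    rw [Nat.cast_sub hk]; push_cast; ring
  have ecast3 : (k : ℝ) * ((k : ℝ) + ((n + 2 : ℕ) : ℝ) - 2)
      = (k : ℝ) * ((k : ℝ) + (n : ℝ)) := by push_cast; ring
  rw [ecast1, ecast2] at EqQ
  rw [ecast1, ecast3] at EqR
  -- the two associated polynomials
  set c1 : ℝ := 2 * ((k : ℝ) * ((k : ℝ) + (n : ℝ) - 2)) - 2 * (n : ℝ) + 2 with hc1
  set B1 : ℝ := 2 * (k : ℝ) + 2 * (n : ℝ) - 2 with hB1
  set B2 : ℝ := 2 - 2 * (k : ℝ) with hB2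
  -- ODE for v
  have Ev : (1 - X ^ 2) * derivative (derivative (C c1 * q + C B1 * (q - X * derivative q)))
      - C ((n : ℝ) + 1) * (X * derivative (C c1 * q + C B1 * (q - X * derivative q)))
      + C (((k : ℝ) - 2) * ((k : ℝ) + (n : ℝ) - 2))
        * (C c1 * q + C B1 * (q - X * derivative q)) = 0 := by
    apply Polynomial.funext
    intro t
    have h1 := congrArg (eval t) Eq0
    have h3 := congrArg (eval t) (congrArg derivative Eq0)
    simp only [derivative_sub, derivative_add, derivative_mul, derivative_one,
      derivative_X_pow, derivative_C, derivative_X, derivative_zero, eval_add, eval_sub,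
      eval_mul, eval_pow, eval_C, eval_X, eval_one, eval_zero, zero_mul, one_mul, mul_one,
      zero_add, add_zero, sub_zero, zero_sub, Nat.cast_ofNat, eval_neg, pow_one] at h1 h3 ⊢
    norm_num at h3 ⊢
    linear_combination (2 * ((k:ℝ) * ((k:ℝ) + (n:ℝ) - 2)) - 2 * (k:ℝ) - 4 * (n:ℝ) + 4) * h1
      - ((2 * (k:ℝ) + 2 * (n:ℝ) - 2) * t) * h3
  have Ew : (1 - X ^ 2) * derivative (derivative (C c1 * q + C B2 * (q - X * derivative q)))
      - C ((n : ℝ) + 1) * (X * derivative (C c1 * q + C B2 * (q - X * derivative q)))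
      + C ((k : ℝ) * ((k : ℝ) + (n : ℝ)))
        * (C c1 * q + C B2 * (q - X * derivative q)) = 0 := by
    apply Polynomial.funext
    intro t
    have h1 := congrArg (eval t) Eq0
    have h3 := congrArg (eval t) (congrArg derivative Eq0)
    simp only [derivative_sub, derivative_add, derivative_mul, derivative_one,
      derivative_X_pow, derivative_C, derivative_X, derivative_zero, eval_add, eval_sub,
      eval_mul, eval_pow, eval_C, eval_X, eval_one, eval_zero, zero_mul, one_mul, mul_one,
      zero_add, add_zero, sub_zero, zero_sub, Nat.cast_ofNat, eval_neg, pow_one] at h1 h3 ⊢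
    norm_num at h3 ⊢
    linear_combination (2 * ((k:ℝ) * ((k:ℝ) + (n:ℝ) - 2)) - 2 * (n:ℝ) + 2 * (k:ℝ)) * h1
      - ((2 - 2 * (k:ℝ)) * t) * h3
  have hvQ := legendre_unique (n + 2) (k - 2) (by omega) ((n : ℝ) + 1)
    (((k : ℝ) - 2) * ((k : ℝ) + (n : ℝ) - 2)) (by push_cast; ring)
    (by rw [Nat.cast_sub hk]; push_cast; ring)
    (C c1 * q + C B1 * (q - X * derivative q)) qQ Ev EqQ hqQ1
  have hwR := legendre_unique (n + 2) k (by omega) ((n : ℝ) + 1)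
    ((k : ℝ) * ((k : ℝ) + (n : ℝ))) (by push_cast; ring) (by push_cast; ring)
    (C c1 * q + C B2 * (q - X * derivative q)) qR Ew EqR hqR1
  -- eval at 1
  have hg1 : ((n : ℝ) - 1) * eval 1 (derivative q) = (k : ℝ) * ((k : ℝ) + (n : ℝ) - 2) := by
    have h := congrArg (eval 1) Eq0
    simp only [eval_add, eval_sub, eval_mul, eval_pow, eval_C, eval_X, eval_one,
      eval_zero, hq1, mul_one, one_mul] at h
    linear_combination -h
  -- nonvanishing
  have hkR : (2 : ℝ) ≤ (k : ℝ) := by exact_mod_cast hk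
  have hnR : (3 : ℝ) ≤ (n : ℝ) := by exact_mod_cast hn
  intro t
  have e1 := congrArg (eval t) hvQ
  have e2 := congrArg (eval t) hwR
  simp only [eval_add, eval_sub, eval_mul, eval_pow, eval_C, eval_X, eval_one, eval_zero,
    hq1, mul_one, one_mul] at e1 e2
  have e1' : ((n : ℝ) - 1) * (c1 * eval t q + B1 * (eval t q - t * eval t (derivative q)))
      = (-(2 * (k : ℝ) * (((k : ℝ) - 1) * ((k : ℝ) + (n : ℝ) - 1)))) * eval t qQ := by
    linear_combination ((n : ℝ) - 1) * e1 - (B1 * eval t qQ) * hg1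
  have e2' : ((n : ℝ) - 1) * (c1 * eval t q + B2 * (eval t q - t * eval t (derivative q)))
      = (2 * ((k : ℝ) + (n : ℝ) - 2) * (((k : ℝ) - 1) * ((k : ℝ) + (n : ℝ) - 1))) * eval t qR := by
    linear_combination ((n : ℝ) - 1) * e2 - (B2 * eval t qR) * hg1
  have key : ((n : ℝ) - 1) * (2 * (k : ℝ) + (n : ℝ) - 2)
        * (eval t q - t * eval t (derivative q))
      = -(((k : ℝ) - 1) * ((k : ℝ) + (n : ℝ) - 1)
        * ((k : ℝ) * eval t qQ + ((k : ℝ) + (n : ℝ) - 2) * eval t qR)) := by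
    linear_combination ((1 : ℝ) / 2) * e1' - (1 / 2 : ℝ) * e2'
  simp only [Polynomial.deriv]
  have hne1 : ((k : ℝ) - 1) * ((k : ℝ) + (n : ℝ) - 1) ≠ 0 :=
    ne_of_gt (mul_pos (by linarith) (by linarith))
  have hne2 : 2 * (k : ℝ) + (n : ℝ) - 2 ≠ 0 := ne_of_gt (by linarith)
  field_simp
  rw [div_eq_div_iff hne1 (ne_of_gt (by linarith))]
  linear_combination key
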